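/- Fix a nonzero complex number β^{1/2}, set β^{−1/2} := (β^{1/2})^{−1} and 𝒬 := β^{1/2} − β^{−1/2}. Let Γ be a free abelian group of finite rank, let S ⊆ Γ be a finite subset with 0 ∉ S and S = −S, and let Z : Γ → ℂ and ẑ : Γ → ℂ be group homomorphisms with Z(γ) ≠ 0 for every γ ∈ S. Let Ω, Ω̄ : Γ → ℚ[t, t^{−1}] be maps vanishing outside S and satisfying Ω(γ) = Ω(−γ) and Ω̄(γ) = Ω̄(−γ) for all γ ∈ Γ; write Ω(γ) = Σ_{n∈ℤ} Ω_n(γ) t^n and likewise for Ω̄. If Ω̄_n(γ) + Ω̄_{−n}(γ) = Ω_n(γ) + Ω_{−n}(γ) for every γ ∈ Γ and every n ∈ ℤ, then for every integer k ≥ 1 one has Σ_{γ∈S} Σ_{n∈ℤ} Ω̄_n(γ) · B_{2,k+2}(𝒬/2 + ẑ(γ)/(2πi) + n𝒬/2 | β^{1/2}, −β^{−1/2}) · (2πi/Z(γ))^k = Σ_{γ∈S} Σ_{n∈ℤ} Ω_n(γ) · B_{2,k+2}(𝒬/2 + ẑ(γ)/(2πi) + n𝒬/2 | β^{1/2}, −β^{−1/2})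 · (2πi/Z(γ))^k. -/

import Mathlib

open scoped Nat

/-- The formal power series `e^{c w} ∈ ℂ⟦w⟧`. -/
noncomputable def expPS (c : ℂ) : PowerSeries ℂ :=
  PowerSeries.rescale c (PowerSeries.exp ℂ)

/-- The formal power series `(e^{a w} - 1)/w ∈ ℂ⟦w⟧`; its constant term is `a`,
so it is invertible in `ℂ⟦w⟧` whenever `a ≠ 0`. -/
noncomputable def bernFactor (a : ℂ) : PowerSeries ℂ :=
  PowerSeries.mk fun n => PowerSeries.coeff (n + 1) (expPS a)

/-- The generating series `w^N e^{xw} / ∏ᵢ (e^{aᵢ w} - 1) ∈ ℂ⟦w⟧` of the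
multiple Bernoulli polynomials. -/
noncomputable def multBernoulliGF {N : ℕ} (x : ℂ) (a : Fin N → ℂ) : PowerSeries ℂ :=
  expPS x * (∏ i, bernFactor (a i))⁻¹

/-- The multiple Bernoulli polynomial `B_{N,k}(x | a₁, …, a_N)`, defined via
`w^N e^{xw} / ∏ᵢ (e^{aᵢ w} - 1) = Σ_k B_{N,k}(x | a) w^k / k!`. -/
noncomputable def multBernoulli (N k : ℕ) (x : ℂ) (a : Fin N → ℂ) : ℂ :=
  (k ! : ℂ) * PowerSeries.coeff k (multBernoulliGF x a)

lemma expPS_coeff (c : ℂ) (n : ℕ) : PowerSeries.coeff n (expPS c) = c ^ n / n ! := by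
  simp [expPS, PowerSeries.coeff_rescale, PowerSeries.coeff_exp]
  ring

lemma expPS_add (c d : ℂ) : expPS c * expPS d = expPS (c + d) :=
  PowerSeries.exp_mul_exp_eq_exp_add c d

lemma expPS_zero : expPS 0 = 1 := by
  ext n
  rw [expPS_coeff]
  cases n <;> simp

lemma constantCoeff_expPS (c : ℂ) : PowerSeries.constantCoeff (expPS c) = 1 := by
  rw [← PowerSeries.coeff_zero_eq_constantCoeff_apply, expPS_coeff]; simp

lemma X_mul_bernFactor (a : ℂ) :
    (PowerSeries.X : PowerSeries ℂ) * bernFactor a = expPS a - 1 := by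
  ext n
  cases n with
  | zero => simp [PowerSeries.coeff_zero_eq_constantCoeff_apply, constantCoeff_expPS]
  | succ m =>
      rw [PowerSeries.coeff_succ_X_mul]
      simp [bernFactor, PowerSeries.coeff_one]

lemma bernFactor_neg (a : ℂ) : bernFactor (-a) = -(expPS (-a) * bernFactor a) := by
  have hX : (PowerSeries.X : PowerSeries ℂ) ≠ 0 := PowerSeries.X_ne_zero
  apply mul_left_cancel₀ hX
  rw [X_mul_bernFactor, mul_neg, mul_left_comm, X_mul_bernFactor, mul_sub, expPS_add, mul_one,
    neg_add_cancel, expPS_zero]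
  ring

lemma rescale_neg_one_bernFactor (a : ℂ) :
    PowerSeries.rescale (-1) (bernFactor a) = expPS (-a) * bernFactor a := by
  rw [← neg_neg (expPS (-a) * bernFactor a), ← bernFactor_neg]
  ext n
  rw [PowerSeries.coeff_rescale, map_neg]
  simp only [bernFactor, PowerSeries.coeff_mk, expPS_coeff]
  rw [neg_pow a (n + 1), pow_succ]
  ring

lemma rescale_neg_one_inv (P : PowerSeries ℂ) (hP : PowerSeries.constantCoeff P ≠ 0) :
    PowerSeries.rescale (-1) P⁻¹ = (PowerSeries.rescale (-1) P)⁻¹ := by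
  have h0 : PowerSeries.constantCoeff (PowerSeries.rescale (-1) P) ≠ 0 := by
    rwa [← PowerSeries.coeff_zero_eq_constantCoeff_apply, PowerSeries.coeff_rescale, pow_zero,
      one_mul, PowerSeries.coeff_zero_eq_constantCoeff_apply]
  rw [eq_comm, PowerSeries.inv_eq_iff_mul_eq_one h0, ← map_mul,
    PowerSeries.inv_mul_cancel P hP, map_one]

lemma gf_symm (b : ℂ) (hb : b ≠ 0) (x : ℂ) :
    multBernoulliGF ((b - b⁻¹) - x) ![b, -b⁻¹] =
      PowerSeries.rescale (-1) (multBernoulliGF x ![b, -b⁻¹]) := by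
  have hprod : (∏ i, bernFactor (![b, -b⁻¹] i)) = bernFactor b * bernFactor (-b⁻¹) := by
    rw [Fin.prod_univ_two]; rfl
  have hc : PowerSeries.constantCoeff (bernFactor b * bernFactor (-b⁻¹)) ≠ 0 := by
    have h1 : ∀ a : ℂ, PowerSeries.constantCoeff (bernFactor a) = a := by
      intro a
      rw [← PowerSeries.coeff_zero_eq_constantCoeff_apply]
      simp [bernFactor, expPS_coeff]
    rw [map_mul, h1, h1]
    simp [hb]
  have hresP : PowerSeries.rescale (-1) (bernFactor b * bernFactor (-b⁻¹)) =
      expPS (-(b - b⁻¹)) * (bernFactor b * bernFactor (-b⁻¹)) := by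
    rw [map_mul, rescale_neg_one_bernFactor, rescale_neg_one_bernFactor, neg_neg,
      mul_mul_mul_comm, expPS_add]
    have h2 : -b + b⁻¹ = -(b - b⁻¹) := by ring
    rw [h2]
  have hinv : (expPS (-(b - b⁻¹)) * (bernFactor b * bernFactor (-b⁻¹)))⁻¹ =
      expPS (b - b⁻¹) * (bernFactor b * bernFactor (-b⁻¹))⁻¹ := by
    have h0 : PowerSeries.constantCoeff
        (expPS (-(b - b⁻¹)) * (bernFactor b * bernFactor (-b⁻¹))) ≠ 0 := by
      rw [map_mul, constantCoeff_expPS, one_mul]; exact hc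
    rw [PowerSeries.inv_eq_iff_mul_eq_one h0]
    calc expPS (b - b⁻¹) * (bernFactor b * bernFactor (-b⁻¹))⁻¹ *
          (expPS (-(b - b⁻¹)) * (bernFactor b * bernFactor (-b⁻¹)))
        = (expPS (b - b⁻¹) * expPS (-(b - b⁻¹))) *
            ((bernFactor b * bernFactor (-b⁻¹))⁻¹ * (bernFactor b * bernFactor (-b⁻¹))) := by
          ring
      _ = 1 := by
          rw [expPS_add, add_neg_cancel, expPS_zero, one_mul,
            PowerSeries.inv_mul_cancel _ hc]
  have hre : PowerSeries.rescale (-1) (expPS x) = expPS (-x) := by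
    unfold expPS
    rw [PowerSeries.rescale_rescale]
    norm_num
  unfold multBernoulliGF
  rw [hprod, map_mul, rescale_neg_one_inv _ hc, hresP, hinv, hre, ← mul_assoc, expPS_add]
  have h3 : -x + (b - b⁻¹) = b - b⁻¹ - x := by ring
  rw [h3]

lemma multBernoulli_symm (b : ℂ) (hb : b ≠ 0) (m : ℕ) (x : ℂ) :
    multBernoulli 2 m ((b - b⁻¹) - x) ![b, -b⁻¹] =
      (-1 : ℂ) ^ m * multBernoulli 2 m x ![b, -b⁻¹] := by
  unfold multBernoulli
  rw [gf_symm b hb, PowerSeries.coeff_rescale]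
  ring

lemma bps_key_lemma (b : ℂ) (hb : b ≠ 0) {Γ : Type*} [AddCommGroup Γ]
    (S : Finset Γ) (hSneg : ∀ γ ∈ S, -γ ∈ S) (Z zhat : Γ →+ ℂ)
    (W : Γ → LaurentPolynomial ℚ) (hWsym : ∀ γ : Γ, W γ = W (-γ)) (k : ℕ) :
    2 * (∑ γ ∈ S, ∑ᶠ n : ℤ, (AddMonoidAlgebra.coeff (W γ) n : ℂ) *
        multBernoulli 2 (k + 2)
          ((b - b⁻¹) / 2 + zhat γ / (2 * Real.pi * Complex.I) + (n : ℂ) * (b - b⁻¹) / 2)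
          ![b, -b⁻¹] * (2 * Real.pi * Complex.I / Z γ) ^ k) =
    ∑ γ ∈ S, ∑ᶠ n : ℤ, ((AddMonoidAlgebra.coeff (W γ) n + AddMonoidAlgebra.coeff (W γ) (-n) : ℚ) : ℂ) *
        multBernoulli 2 (k + 2)
          ((b - b⁻¹) / 2 + zhat γ / (2 * Real.pi * Complex.I) + (n : ℂ) * (b - b⁻¹) / 2)
          ![b, -b⁻¹] * (2 * Real.pi * Complex.I / Z γ) ^ k := by
  have hswap : (∑ γ ∈ S, ∑ᶠ n : ℤ, (AddMonoidAlgebra.coeff (W γ) n : ℂ) *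
        multBernoulli 2 (k + 2)
          ((b - b⁻¹) / 2 + zhat γ / (2 * Real.pi * Complex.I) + (n : ℂ) * (b - b⁻¹) / 2)
          ![b, -b⁻¹] * (2 * Real.pi * Complex.I / Z γ) ^ k) =
      ∑ γ ∈ S, ∑ᶠ n : ℤ, (AddMonoidAlgebra.coeff (W γ) (-n) : ℂ) *
        multBernoulli 2 (k + 2)
          ((b - b⁻¹) / 2 + zhat γ / (2 * Real.pi * Complex.I) + (n : ℂ) * (b - b⁻¹) / 2)
          ![b, -b⁻¹] * (2 * Real.pi * Complex.I / Z γ) ^ k := by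
    calc (∑ γ ∈ S, ∑ᶠ n : ℤ, (AddMonoidAlgebra.coeff (W γ) n : ℂ) *
        multBernoulli 2 (k + 2)
          ((b - b⁻¹) / 2 + zhat γ / (2 * Real.pi * Complex.I) + (n : ℂ) * (b - b⁻¹) / 2)
          ![b, -b⁻¹] * (2 * Real.pi * Complex.I / Z γ) ^ k) =
        ∑ γ ∈ S, ∑ᶠ n : ℤ, (AddMonoidAlgebra.coeff (W (-γ)) n : ℂ) *
        multBernoulli 2 (k + 2)
          ((b - b⁻¹) / 2 + zhat (-γ) / (2 * Real.pi * Complex.I) + (n : ℂ) * (b - b⁻¹) / 2)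
          ![b, -b⁻¹] * (2 * Real.pi * Complex.I / Z (-γ)) ^ k := by
          refine Finset.sum_equiv (Equiv.neg Γ) (fun i => ?_) (fun i _ => ?_)
          · simp only [Equiv.neg_apply]
            constructor
            · exact hSneg i
            · intro h
              have := hSneg _ h
              rwa [neg_neg] at this
          · simp only [Equiv.neg_apply, neg_neg]
      _ = ∑ γ ∈ S, ∑ᶠ n : ℤ, (AddMonoidAlgebra.coeff (W γ) (-n) : ℂ) *
        multBernoulli 2 (k + 2)
          ((b - b⁻¹) / 2 + zhat γ / (2 * Real.pi * Complex.I) + (n : ℂ) * (b - b⁻¹) / 2)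
          ![b, -b⁻¹] * (2 * Real.pi * Complex.I / Z γ) ^ k := by
          refine Finset.sum_congr rfl (fun γ _ => ?_)
          rw [← finsum_comp_equiv (Equiv.neg ℤ)]
          refine finsum_congr (fun n => ?_)
          simp only [Equiv.neg_apply]
          rw [← hWsym γ, map_neg zhat, map_neg Z]
          have harg : (b - b⁻¹) / 2 + (-(zhat γ)) / (2 * Real.pi * Complex.I) +
              (((-n : ℤ) : ℂ)) * (b - b⁻¹) / 2 =
              (b - b⁻¹) - ((b - b⁻¹) / 2 + zhat γ / (2 * Real.pi * Complex.I) +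
                (n : ℂ) * (b - b⁻¹) / 2) := by
            push_cast
            ring
          rw [harg, multBernoulli_symm b hb, div_neg, neg_pow (2 * (Real.pi : ℂ) * Complex.I / Z γ) k]
          have hsgn : ((-1 : ℂ)) ^ (k + 2) * (-1) ^ k = 1 := by
            rw [← pow_add, show k + 2 + k = 2 * (k + 1) by ring, pow_mul]
            norm_num
          rw [show ∀ (w m c : ℂ), w * ((-1 : ℂ) ^ (k + 2) * m) * ((-1 : ℂ) ^ k * c) =
              w * m * c * ((-1 : ℂ) ^ (k + 2) * (-1) ^ k) from fun w m c => by ring,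
            hsgn, mul_one]
  rw [two_mul]
  nth_rewrite 2 [hswap]
  rw [← Finset.sum_add_distrib]
  refine Finset.sum_congr rfl (fun γ _ => ?_)
  have hmulfin : ∀ (v : ℤ → ℚ) (g : ℤ → ℂ), (Function.support v).Finite →
      (Function.support fun n => (v n : ℂ) * g n).Finite := by
    intro v g hv
    refine hv.subset (fun n hn => ?_)
    simp only [Function.mem_support] at hn ⊢
    intro h
    exact hn (by rw [h]; simp)
  have hfin1 : (Function.support fun n : ℤ => (AddMonoidAlgebra.coeff (W γ) n : ℂ) *
      (multBernoulli 2 (k + 2)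
          ((b - b⁻¹) / 2 + zhat γ / (2 * Real.pi * Complex.I) + (n : ℂ) * (b - b⁻¹) / 2)
          ![b, -b⁻¹] * (2 * Real.pi * Complex.I / Z γ) ^ k)).Finite := by
    refine hmulfin _ _ ?_
    rw [Finsupp.fun_support_eq]
    exact (AddMonoidAlgebra.coeff (W γ)).support.finite_toSet
  have hfin2 : (Function.support fun n : ℤ => (AddMonoidAlgebra.coeff (W γ) (-n) : ℂ) *
      (multBernoulli 2 (k + 2)
          ((b - b⁻¹) / 2 + zhat γ / (2 * Real.pi * Complex.I) + (n : ℂ) * (b - b⁻¹) / 2)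
          ![b, -b⁻¹] * (2 * Real.pi * Complex.I / Z γ) ^ k)).Finite := by
    refine hmulfin (fun n => AddMonoidAlgebra.coeff (W γ) (-n)) _ ?_
    have : (Function.support fun n : ℤ => AddMonoidAlgebra.coeff (W γ) (-n)) ⊆ Neg.neg ⁻¹' ↑(AddMonoidAlgebra.coeff (W γ)).support := by
      intro n hn
      simp only [Function.mem_support] at hn
      simp only [Set.mem_preimage, Finset.mem_coe, Finsupp.mem_support_iff]
      exact hn
    refine Set.Finite.subset ?_ this
    exact Set.Finite.preimage (Set.injOn_of_injective neg_injective) (AddMonoidAlgebra.coeff (W γ)).support.finite_toSet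
  rw [← finsum_add_distrib (by simpa only [Function.HasFiniteSupport, mul_assoc] using hfin1) (by simpa only [Function.HasFiniteSupport, mul_assoc] using hfin2)]
  refine finsum_congr (fun n => ?_)
  push_cast
  ring


/-- any assignment `Ω̄` of refined BPS invariants preserving the symmetric
combinations `Ω_n + Ω_{-n}` gives the same value of the refined free-energy formula:
if `Ω̄_n(γ) + Ω̄_{-n}(γ) = Ω_n(γ) + Ω_{-n}(γ)` for all `γ, n`, then for every `k ≥ 1`
(i.e. every half-integer genus `g = (k+2)/2 > 1`) the two free-energy sums agree. -/
theorem bps_invariants_symmetric_combination_suffices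
    (b : ℂ) (hb : b ≠ 0)
    (Γ : Type*) [AddCommGroup Γ] [Module.Free ℤ Γ] [Module.Finite ℤ Γ]
    (S : Finset Γ) (hS0 : (0 : Γ) ∉ S) (hSneg : ∀ γ ∈ S, -γ ∈ S)
    (Z zhat : Γ →+ ℂ) (hZ : ∀ γ ∈ S, Z γ ≠ 0)
    (Ω Ωbar : Γ → LaurentPolynomial ℚ)
    (hΩsupp : ∀ γ ∉ S, Ω γ = 0) (hΩbarsupp : ∀ γ ∉ S, Ωbar γ = 0)
    (hΩsym : ∀ γ : Γ, Ω γ = Ω (-γ)) (hΩbarsym : ∀ γ : Γ, Ωbar γ = Ωbar (-γ))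
    (hcomb : ∀ (γ : Γ) (n : ℤ), AddMonoidAlgebra.coeff (Ωbar γ) n + AddMonoidAlgebra.coeff (Ωbar γ) (-n) = AddMonoidAlgebra.coeff (Ω γ) n + AddMonoidAlgebra.coeff (Ω γ) (-n)) :
    ∀ k : ℕ, 1 ≤ k →
      (∑ γ ∈ S, ∑ᶠ n : ℤ, (AddMonoidAlgebra.coeff (Ωbar γ) n : ℂ) *
          multBernoulli 2 (k + 2)
            ((b - b⁻¹) / 2 + zhat γ / (2 * Real.pi * Complex.I) + (n : ℂ) * (b - b⁻¹) / 2)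
            ![b, -b⁻¹] *
          (2 * Real.pi * Complex.I / Z γ) ^ k) =
      (∑ γ ∈ S, ∑ᶠ n : ℤ, (AddMonoidAlgebra.coeff (Ω γ) n : ℂ) *
          multBernoulli 2 (k + 2)
            ((b - b⁻¹) / 2 + zhat γ / (2 * Real.pi * Complex.I) + (n : ℂ) * (b - b⁻¹) / 2)
            ![b, -b⁻¹] *
          (2 * Real.pi * Complex.I / Z γ) ^ k) := by
  intro k hk
  refine mul_left_cancel₀ (two_ne_zero : (2 : ℂ) ≠ 0) ?_
  rw [bps_key_lemma b hb S hSneg Z zhat Ωbar hΩbarsym k,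
    bps_key_lemma b hb S hSneg Z zhat Ω hΩsym k]
  refine Finset.sum_congr rfl (fun γ _ => ?_)
  refine finsum_congr (fun n => ?_)
  rw [hcomb γ n]
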